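/- Let ℓ ≥ 2 and let W be a vertex-weight function on vertices v_1, …, v_n with W(v_1) ≥ W(v_2) ≥ … ≥ W(v_n) ≥ 0. Then the min-edge-weight extremal number ex(n, w_min, K_ℓ) — the maximum of Σ_{v_i v_j ∈ E(G)} min{W(v_i), W(v_j)} over all K_ℓ-free graphs G on {v_1, …, v_n} — equals w_min(B_ℓ(v_1, …, v_n)), the total min-edge-weight of the complete (ℓ−1)-partite graph B_ℓ(v_1, …, v_n) in which v_i and v_j are adjacent if and only if i ≢ j (mod ℓ−1). -/

import Mathlib

open Finset

open SimpleGraph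

attribute [-instance] SimpleGraph.instDecidableRelFinAdjTuranGraph

open scoped Classical in
lemma twoE_eq {N : ℕ} (K : SimpleGraph (Fin N)) :
    (∑ a : Fin N, ∑ b : Fin N, if K.Adj a b then 1 else 0 : ℕ) = 2 * #K.edgeFinset := by
  rw [← K.sum_degrees_eq_twice_card_edges]
  refine Finset.sum_congr rfl fun a _ => ?_
  rw [degree, neighborFinset_eq_filter]
  simp [Finset.sum_boole]

lemma sum_castLE {M : Type*} [AddCommMonoid M] {n m : ℕ} (h : m ≤ n) (f : Fin n → M)
    (hf : ∀ i : Fin n, ¬ (i : ℕ) < m → f i = 0) :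
    ∑ i : Fin n, f i = ∑ a : Fin m, f (Fin.castLE h a) := by
  have h2 : ∑ a : Fin m, f (Fin.castLE h a)
      = ∑ i ∈ (univ : Finset (Fin m)).map (Fin.castLEEmb h), f i := by
    rw [Finset.sum_map]; rfl
  rw [h2]
  refine (Finset.sum_subset (Finset.subset_univ _) fun i _ hi => hf i fun hlt => ?_).symm
  exact hi (Finset.mem_map.2 ⟨⟨(i : ℕ), hlt⟩, Finset.mem_univ _, Fin.ext rfl⟩)

lemma telescope (f : ℕ → ℝ) {a b : ℕ} (hab : a ≤ b) :
    ∑ m ∈ Finset.Ico a b, (f m - f (m+1)) = f a - f b := by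
  rw [Finset.sum_Ico_eq_sub _ hab, Finset.sum_range_sub' f, Finset.sum_range_sub' f]
  ring

open scoped Classical in
lemma turan_count_le {N r : ℕ} (hr : 0 < r) (H : SimpleGraph (Fin N))
    (hH : H.CliqueFree (r + 1)) :
    (∑ a : Fin N, ∑ b : Fin N, if H.Adj a b then 1 else 0 : ℕ)
      ≤ ∑ a : Fin N, ∑ b : Fin N, if (turanGraph N r).Adj a b then 1 else 0 := by
  rw [twoE_eq, twoE_eq]
  have h := (isTuranMaximal_turanGraph (n := N) hr).2 (G' := H) hH
  convert Nat.mul_le_mul_left 2 h using 4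


/-- The complete `(ℓ-1)`-partite graph `B_ℓ(v_1, …, v_n)` on vertices indexed `0, …, n-1`,
where vertex `i` is placed in part `i mod (ℓ-1)`: vertices `i` and `j` are adjacent iff
`i ≢ j (mod ℓ-1)`. (With `r = ℓ - 1` parts.) -/
def modPartiteGraph (n r : ℕ) : SimpleGraph (Fin n) where
  Adj i j := (i : ℕ) % r ≠ (j : ℕ) % r
  symm := ⟨fun _ _ h => Ne.symm h⟩
  loopless := ⟨fun _ h => h rfl⟩

open scoped Classical in
/-- For `ℓ ≥ 2` and vertex weights `W(v_1) ≥ … ≥ W(v_n) ≥ 0` (vertex `i : Fin n`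
standing for `v_{i+1}`), the min-edge-weight extremal number `ex(n, w_min, K_ℓ)` — the maximum
of `∑_{v_i v_j ∈ E(G)} min(W(v_i), W(v_j))` over `K_ℓ`-free graphs `G` on the `n` vertices —
equals the total min-edge-weight of `B_ℓ(v_1, …, v_n)`. Graph weights are expressed as half
the sum over ordered pairs. -/
theorem min_weight_turan (n ℓ : ℕ) (hℓ : 2 ≤ ℓ) (W : Fin n → ℝ)
    (hmono : ∀ i j : Fin n, i ≤ j → W j ≤ W i) (hnn : ∀ i, 0 ≤ W i) :
    IsGreatest {x : ℝ | ∃ G : SimpleGraph (Fin n), G.CliqueFree ℓ ∧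
        x = (∑ i : Fin n, ∑ j : Fin n, if G.Adj i j then min (W i) (W j) else 0) / 2}
      ((∑ i : Fin n, ∑ j : Fin n,
        if (modPartiteGraph n (ℓ - 1)).Adj i j then min (W i) (W j) else 0) / 2) := by
  set r := ℓ - 1 with hrdef
  have hr : 0 < r := by omega
  have hrℓ : r + 1 = ℓ := by omega
  have hmod : modPartiteGraph n r = turanGraph n r := rfl
  -- layered weights
  set W' : ℕ → ℝ := fun k => if h : k < n then W ⟨k, h⟩ else 0 with hW'def
  set c : ℕ → ℝ := fun m => W' m - W' (m + 1) with hcdef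
  have hW'anti : ∀ k, W' (k + 1) ≤ W' k := by
    intro k
    by_cases h1 : k + 1 < n
    · have h0 : k < n := by omega
      simp only [hW'def, dif_pos h1, dif_pos h0]
      exact hmono ⟨k, h0⟩ ⟨k + 1, h1⟩ (by simp)
    · simp only [hW'def, dif_neg h1]
      by_cases h0 : k < n
      · simp only [dif_pos h0]; exact hnn _
      · simp [dif_neg h0]
  have hc : ∀ m, 0 ≤ c m := fun m => sub_nonneg.2 (hW'anti m)
  have hWi : ∀ i : Fin n, W i = ∑ m ∈ Finset.range n, if (i : ℕ) ≤ m then c m else 0 := by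
    intro i
    rw [← Finset.sum_filter]
    have hfil : (Finset.range n).filter (fun m => (i : ℕ) ≤ m) = Finset.Ico (i : ℕ) n := by
      ext m; simp [Finset.mem_Ico, and_comm]
    rw [hfil, hcdef]
    rw [telescope W' (le_of_lt i.2)]
    have h1 : W' (i : ℕ) = W i := by simp [hW'def, i.2]
    have h2 : W' n = 0 := by simp [hW'def]
    rw [h1, h2, sub_zero]
  have hmin : ∀ i j : Fin n, min (W i) (W j)
      = ∑ m ∈ Finset.range n, if (i : ℕ) ≤ m ∧ (j : ℕ) ≤ m then c m else 0 := by
    intro i j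
    rcases le_total i j with hij | hij
    · have : min (W i) (W j) = W j := min_eq_right (hmono i j hij)
      rw [this, hWi j]
      refine Finset.sum_congr rfl fun m _ => ?_
      have : ((i : ℕ) ≤ m ∧ (j : ℕ) ≤ m) ↔ (j : ℕ) ≤ m :=
        ⟨fun h => h.2, fun h => ⟨le_trans hij h, h⟩⟩
      simp [this]
    · have : min (W i) (W j) = W i := min_eq_left (hmono j i hij)
      rw [this, hWi i]
      refine Finset.sum_congr rfl fun m _ => ?_
      have : ((i : ℕ) ≤ m ∧ (j : ℕ) ≤ m) ↔ (i : ℕ) ≤ m :=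
        ⟨fun h => h.1, fun h => ⟨h, le_trans hij h⟩⟩
      simp [this]
  -- key decomposition
  have key : ∀ G : SimpleGraph (Fin n),
      (∑ i : Fin n, ∑ j : Fin n, if G.Adj i j then min (W i) (W j) else 0)
      = ∑ m ∈ Finset.range n, c m *
          ((∑ i : Fin n, ∑ j : Fin n,
            if G.Adj i j ∧ (i : ℕ) ≤ m ∧ (j : ℕ) ≤ m then 1 else 0 : ℕ) : ℝ) := by
    intro G
    have step1 : ∀ i j : Fin n, (if G.Adj i j then min (W i) (W j) else 0)
        = ∑ m ∈ Finset.range n,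
            (if G.Adj i j ∧ (i : ℕ) ≤ m ∧ (j : ℕ) ≤ m then c m else 0) := by
      intro i j
      by_cases hadj : G.Adj i j
      · rw [if_pos hadj, hmin i j]
        exact Finset.sum_congr rfl fun m _ => by simp [hadj]
      · simp [hadj]
    calc (∑ i : Fin n, ∑ j : Fin n, if G.Adj i j then min (W i) (W j) else 0)
        = ∑ i : Fin n, ∑ j : Fin n, ∑ m ∈ Finset.range n,
            (if G.Adj i j ∧ (i : ℕ) ≤ m ∧ (j : ℕ) ≤ m then c m else 0) := by
          exact Finset.sum_congr rfl fun i _ => Finset.sum_congr rfl fun j _ => step1 i j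
      _ = ∑ i : Fin n, ∑ m ∈ Finset.range n, ∑ j : Fin n,
            (if G.Adj i j ∧ (i : ℕ) ≤ m ∧ (j : ℕ) ≤ m then c m else 0) :=
          Finset.sum_congr rfl fun i _ => Finset.sum_comm
      _ = ∑ m ∈ Finset.range n, ∑ i : Fin n, ∑ j : Fin n,
            (if G.Adj i j ∧ (i : ℕ) ≤ m ∧ (j : ℕ) ≤ m then c m else 0) :=
          Finset.sum_comm
      _ = ∑ m ∈ Finset.range n, c m *
          ((∑ i : Fin n, ∑ j : Fin n,
            if G.Adj i j ∧ (i : ℕ) ≤ m ∧ (j : ℕ) ≤ m then 1 else 0 : ℕ) : ℝ) := by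
          refine Finset.sum_congr rfl fun m _ => ?_
          push_cast
          rw [Finset.mul_sum]
          refine Finset.sum_congr rfl fun i _ => ?_
          rw [Finset.mul_sum]
          refine Finset.sum_congr rfl fun j _ => ?_
          by_cases h : G.Adj i j ∧ (i : ℕ) ≤ m ∧ (j : ℕ) ≤ m <;> simp [h]
  -- counting bound
  have count_le : ∀ G : SimpleGraph (Fin n), G.CliqueFree ℓ → ∀ m ∈ Finset.range n,
      (∑ i : Fin n, ∑ j : Fin n,
        if G.Adj i j ∧ (i : ℕ) ≤ m ∧ (j : ℕ) ≤ m then 1 else 0 : ℕ)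
      ≤ ∑ i : Fin n, ∑ j : Fin n,
          if (turanGraph n r).Adj i j ∧ (i : ℕ) ≤ m ∧ (j : ℕ) ≤ m then 1 else 0 := by
    intro G hG m hm
    have hmn : m + 1 ≤ n := Finset.mem_range.1 hm
    have reindex : ∀ K : SimpleGraph (Fin n),
        (∑ i : Fin n, ∑ j : Fin n,
          if K.Adj i j ∧ (i : ℕ) ≤ m ∧ (j : ℕ) ≤ m then 1 else 0 : ℕ)
        = ∑ a : Fin (m + 1), ∑ b : Fin (m + 1),
            if (K.comap (Fin.castLE hmn)).Adj a b then 1 else 0 := by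
      intro K
      rw [sum_castLE hmn _ (fun i hi => ?_)]
      · refine Finset.sum_congr rfl fun a _ => ?_
        rw [sum_castLE hmn _ (fun j hj => ?_)]
        · refine Finset.sum_congr rfl fun b _ => ?_
          have h1 : ((a : ℕ)) ≤ m := Nat.lt_succ_iff.1 a.2
          have h2 : ((b : ℕ)) ≤ m := Nat.lt_succ_iff.1 b.2
          simp [SimpleGraph.comap_adj, Fin.coe_castLE, h1, h2]
        · rw [if_neg]; intro hcon; exact hj (Nat.lt_succ_of_le hcon.2.2)
      · rw [Finset.sum_eq_zero]
        intro j _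
        rw [if_neg]; intro hcon; exact hi (Nat.lt_succ_of_le hcon.2.1)
    rw [reindex G, reindex (turanGraph n r)]
    have hGc : (G.comap (Fin.castLE hmn)).CliqueFree (r + 1) := by
      rw [hrℓ]
      exact hG.comap (SimpleGraph.Embedding.comap ⟨Fin.castLE hmn, Fin.castLE_injective hmn⟩ G).isContained
    have hTc : (turanGraph n r).comap (Fin.castLE hmn) = turanGraph (m + 1) r := by
      ext a b; rfl
    simp only [hTc]
    exact turan_count_le hr _ hGc
  constructor
  · refine ⟨modPartiteGraph n r, ?_, rfl⟩
    rw [hmod, ← hrℓ]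
    exact turanGraph_cliqueFree hr
  · rintro x ⟨G, hG, rfl⟩
    simp only [hmod]
    gcongr (?_ / 2)
    rw [key G, key (turanGraph n r)]
    refine Finset.sum_le_sum fun m hm => ?_
    refine mul_le_mul_of_nonneg_left ?_ (hc m)
    exact_mod_cast count_le G hG m hm
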